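/- Let p > 2 and let A, B ∈ ℝ with A, B > 0. Then the maximum over θ ∈ [0, 2π] of the function g(θ) = (A cos²θ + B sin²θ)/(|cos θ|^p + |sin θ|^p)^{2/p} equals (A^{p/(p-2)} + B^{p/(p-2)})^{(p-2)/p}. -/

import Mathlib

open Real

lemma holder2 {r s : ℝ} (hrs : Real.HolderConjugate r s) {a b u v : ℝ}
    (ha : 0 ≤ a) (hb : 0 ≤ b) (hu : 0 ≤ u) (hv : 0 ≤ v) :
    a * u + b * v ≤ (a ^ r + b ^ r) ^ (1 / r) * (u ^ s + v ^ s) ^ (1 / s) := by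
  have h := Real.inner_le_Lp_mul_Lq_of_nonneg (Finset.univ : Finset (Fin 2)) hrs
    (f := ![a, b]) (g := ![u, v])
    (by intro i _; fin_cases i <;> simpa)
    (by intro i _; fin_cases i <;> simpa)
  simpa [Fin.sum_univ_two] using h

/-- For `p > 2` and `A, B > 0`, the maximum over `θ ∈ [0, 2π]` of
`g(θ) = (A cos²θ + B sin²θ)/(|cos θ|^p + |sin θ|^p)^{2/p}` equals
`(A^{p/(p-2)} + B^{p/(p-2)})^{(p-2)/p}`. -/
theorem stmt1 (p A B : ℝ) (hp : 2 < p) (hA : 0 < A) (hB : 0 < B) :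
    IsGreatest
      ((fun θ : ℝ =>
          (A * Real.cos θ ^ 2 + B * Real.sin θ ^ 2) /
            (|Real.cos θ| ^ p + |Real.sin θ| ^ p) ^ (2 / p)) '' Set.Icc 0 (2 * π))
      ((A ^ (p / (p - 2)) + B ^ (p / (p - 2))) ^ ((p - 2) / p)) := by
  have hp2 : (0:ℝ) < p - 2 := by linarith
  have hp0 : (0:ℝ) < p := by linarith
  set r := p / (p - 2) with hr
  set q := 2 / (p - 2) with hq
  have hr1 : 1 < r := by
    rw [hr, lt_div_iff₀ hp2]; linarith
  have hq0 : 0 < q := by positivity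
  have hrq : r = 1 + q := by rw [hr, hq]; field_simp; ring
  have hconj : Real.HolderConjugate r (p / 2) := by
    refine ⟨?_, by linarith, by linarith⟩
    rw [hr, inv_div, inv_div, inv_one, ← add_div, sub_add_cancel, div_self hp0.ne']
  have h1r : 1 / r = (p - 2) / p := by rw [hr, one_div_div]
  set T := A ^ r + B ^ r with hT
  have hT0 : 0 < T := by
    have := Real.rpow_pos_of_pos hA r
    have := Real.rpow_pos_of_pos hB r
    positivity
  constructor
  · -- membership: attained at arccos √x
    set S := A ^ q + B ^ q with hS
    have hS0 : 0 < S := by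
      have := Real.rpow_pos_of_pos hA q
      have := Real.rpow_pos_of_pos hB q
      positivity
    set x := A ^ q / S with hx
    have hx0 : 0 < x := by
      have := Real.rpow_pos_of_pos hA q
      positivity
    have hx1 : x < 1 := by
      rw [hx, div_lt_one hS0, hS]
      have := Real.rpow_pos_of_pos hB q
      linarith
    have h1x : 1 - x = B ^ q / S := by
      rw [hx, hS]
      field_simp
      ring
    refine ⟨Real.arccos (Real.sqrt x), ⟨Real.arccos_nonneg _,
      le_trans (Real.arccos_le_pi _) (by linarith [Real.pi_pos])⟩, ?_⟩
    have hsx1 : Real.sqrt x ≤ 1 := by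
      rw [show (1:ℝ) = Real.sqrt 1 from Real.sqrt_one.symm]
      exact Real.sqrt_le_sqrt hx1.le
    have hcos : Real.cos (Real.arccos (Real.sqrt x)) = Real.sqrt x :=
      Real.cos_arccos (le_trans (by norm_num) (Real.sqrt_nonneg _)) hsx1
    have hsin : Real.sin (Real.arccos (Real.sqrt x)) = Real.sqrt (1 - x) := by
      rw [Real.sin_arccos, Real.sq_sqrt hx0.le]
    have hc2 : Real.cos (Real.arccos (Real.sqrt x)) ^ 2 = x := by
      rw [hcos, Real.sq_sqrt hx0.le]
    have hs2 : Real.sin (Real.arccos (Real.sqrt x)) ^ 2 = 1 - x := by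
      rw [hsin, Real.sq_sqrt (by linarith)]
    have habsc : |Real.cos (Real.arccos (Real.sqrt x))| = Real.sqrt x := by
      rw [hcos]; exact abs_of_nonneg (Real.sqrt_nonneg _)
    have habss : |Real.sin (Real.arccos (Real.sqrt x))| = Real.sqrt (1 - x) := by
      rw [hsin]; exact abs_of_nonneg (Real.sqrt_nonneg _)
    have hsqrtp : ∀ y : ℝ, 0 ≤ y → Real.sqrt y ^ p = y ^ (p / 2) := by
      intro y hy
      rw [Real.sqrt_eq_rpow, ← Real.rpow_mul hy]
      ring_nf
    have hqp : q * (p / 2) = r := by rw [hq, hr]; field_simp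
    have hxp : x ^ (p / 2) = A ^ r / S ^ (p / 2) := by
      rw [hx, Real.div_rpow (Real.rpow_nonneg hA.le q) hS0.le,
        ← Real.rpow_mul hA.le, hqp]
    have hyp : (1 - x) ^ (p / 2) = B ^ r / S ^ (p / 2) := by
      rw [h1x, Real.div_rpow (Real.rpow_nonneg hB.le q) hS0.le,
        ← Real.rpow_mul hB.le, hqp]
    have hnum : A * x + B * (1 - x) = T / S := by
      rw [hx, h1x, hT]
      have hAr : A * A ^ q = A ^ r := by
        rw [hrq, Real.rpow_add hA, Real.rpow_one]
      have hBr : B * B ^ q = B ^ r := by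
        rw [hrq, Real.rpow_add hB, Real.rpow_one]
      rw [← hAr, ← hBr]; ring
    have hSp0 : (0:ℝ) < S ^ (p / 2) := Real.rpow_pos_of_pos hS0 _
    have hden : (x ^ (p / 2) + (1 - x) ^ (p / 2)) ^ (2 / p) = T ^ (2 / p) / S := by
      rw [hxp, hyp, ← add_div, ← hT,
        Real.div_rpow hT0.le hSp0.le, ← Real.rpow_mul hS0.le]
      have : p / 2 * (2 / p) = 1 := by field_simp
      rw [this, Real.rpow_one]
    show (A * Real.cos (Real.arccos (Real.sqrt x)) ^ 2 +
        B * Real.sin (Real.arccos (Real.sqrt x)) ^ 2) /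
        (|Real.cos (Real.arccos (Real.sqrt x))| ^ p +
          |Real.sin (Real.arccos (Real.sqrt x))| ^ p) ^ (2 / p) = T ^ ((p - 2) / p)
    rw [hc2, hs2, habsc, habss, hsqrtp x hx0.le, hsqrtp (1 - x) (by linarith), hden, hnum]
    have hT2p : (0:ℝ) < T ^ (2 / p) := Real.rpow_pos_of_pos hT0 _
    rw [div_div_div_comm, div_self hS0.ne', div_one]
    rw [show (p - 2) / p = 1 - 2 / p by field_simp, Real.rpow_sub hT0, Real.rpow_one]
  · -- upper bound
    rintro v ⟨θ, hθ, rfl⟩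
    show (A * Real.cos θ ^ 2 + B * Real.sin θ ^ 2) /
        (|Real.cos θ| ^ p + |Real.sin θ| ^ p) ^ (2 / p) ≤ T ^ ((p - 2) / p)
    set c := |Real.cos θ| with hc
    set s := |Real.sin θ| with hs
    have hc0 : 0 ≤ c := abs_nonneg _
    have hs0 : 0 ≤ s := abs_nonneg _
    have hcs : c ^ 2 + s ^ 2 = 1 := by
      rw [hc, hs, sq_abs, sq_abs, Real.cos_sq_add_sin_sq]
    have hdpos : 0 < c ^ p + s ^ p := by
      rcases eq_or_lt_of_le hc0 with h0 | h0
      · have hs1 : s = 1 := by nlinarith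
        rw [← h0, hs1, Real.zero_rpow hp0.ne', Real.one_rpow]; norm_num
      · have h1 := Real.rpow_pos_of_pos h0 p
        have h2 := Real.rpow_nonneg hs0 p
        linarith
    rw [div_le_iff₀ (Real.rpow_pos_of_pos hdpos (2 / p))]
    have hcossq : (Real.cos θ ^ 2 : ℝ) ^ (p / 2) = c ^ p := by
      rw [← sq_abs, ← hc, ← Real.rpow_natCast c 2, ← Real.rpow_mul hc0,
        show ((2:ℕ):ℝ) * (p / 2) = p by push_cast; ring]
    have hsinsq : (Real.sin θ ^ 2 : ℝ) ^ (p / 2) = s ^ p := by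
      rw [← sq_abs, ← hs, ← Real.rpow_natCast s 2, ← Real.rpow_mul hs0,
        show ((2:ℕ):ℝ) * (p / 2) = p by push_cast; ring]
    calc A * Real.cos θ ^ 2 + B * Real.sin θ ^ 2
        ≤ (A ^ r + B ^ r) ^ (1 / r) *
            ((Real.cos θ ^ 2 : ℝ) ^ (p / 2) + (Real.sin θ ^ 2 : ℝ) ^ (p / 2)) ^ (1 / (p / 2)) :=
          holder2 hconj hA.le hB.le (sq_nonneg _) (sq_nonneg _)
      _ = T ^ ((p - 2) / p) * (c ^ p + s ^ p) ^ (2 / p) := by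
          rw [hcossq, hsinsq, one_div_div, one_div_div, ← hT]
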